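/- The double dual elementary transformation recovers the original bundle: if E^W is the r-elementary transformation of E at (x, W), and W* ≅ Ker(ι_x)^⊥ ⊆ ((E^W)^*)_x is the annihilator of Ker(ι_x), then the r-elementary transformation of (E^W)^* at (x, W*) is isomorphic to E^*. -/

import Mathlib

open TensorProduct
open Pointwise

/-!
STATEMENT 4. The double dual elementary transformation recovers the original
bundle: if `E^W` is the `r`-elementary transformation of `E` at `(x, W)` and
`W* = Ker(ι_x)^⊥ ⊆ ((E^W)^*)_x` is the annihilator of `Ker(ι_x)`, then the
`r`-elementary transformation of `(E^W)^*` at `(x, W*)` is isomorphic to `E^*`.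

Formalization: as in Statements 2 and 3, the claim is local at `x`, so we work
over the discrete valuation ring `R = O_{X,x}` with residue field `K = κ(x)`.
`E` corresponds to a finite free `R`-module `M` of rank `n`, `W ⊆ E_x = K ⊗[R] M`
has dimension `n - r`, and `E^W` corresponds to `N = {m : M | 1 ⊗ m ∈ W}`.
The dual `(E^W)^*` is `Dual R N`, and `E^*` maps into it by the (injective)
restriction map `resN = (N.subtype).dualMap : Dual R M → Dual R N`.
A functional `φ ∈ Dual R N` reduces modulo the maximal ideal `𝔪` to an element
`φ̄` of the fibre of `(E^W)^*` at `x`; `φ̄` lies in the annihilator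
`Ker(ι_x)^⊥` of `Ker(ι_x)` precisely when `φ(v) ∈ 𝔪` for every `v ∈ N` with
`v ∈ 𝔪M` (these `v` are the elements of `N` whose classes span `Ker(ι_x)`).
Hence the elementary transformation `((E^W)^*)^{W*} = {φ | φ̄ ∈ Ker(ι_x)^⊥}`
coincides with the image of `E^* = Dual R M`, i.e. is isomorphic to `E^*`.
-/
theorem double_dual_elementary_transformation
    (R : Type) [CommRing R] [IsDomain R] [IsDiscreteValuationRing R]
    (M : Type) [AddCommGroup M] [Module R M] [Module.Free R M] [Module.Finite R M]
    (n r : ℕ) (h0r : 0 < r) (hrn : r < n)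
    (hrank : Module.finrank R M = n)
    -- the residue field κ(x)
    (K : Type) [Field K] [Algebra R K] (hK : Function.Surjective (algebraMap R K))
    (hker : RingHom.ker (algebraMap R K) = IsLocalRing.maximalIdeal R)
    -- W ⊆ E_x = K ⊗[R] M, a subspace of dimension n - r
    (W : Submodule K (K ⊗[R] M))
    (hW : Module.finrank K W = n - r)
    -- N = E^W = ker (E → O_x ⊗ (E_x/W))
    (N : Submodule R M)
    (hN : N = Submodule.comap (TensorProduct.mk R K M 1) (W.restrictScalars R)) :
    -- E^* embeds in (E^W)^* by restriction, and its image is exactly the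
    -- r-elementary transformation of (E^W)^* at (x, W* = Ker(ι_x)^⊥):
    Function.Injective ⇑(N.subtype.dualMap) ∧
    ∀ φ : Module.Dual R N,
      (φ ∈ LinearMap.range N.subtype.dualMap ↔
        ∀ v : N, (v : M) ∈ (IsLocalRing.maximalIdeal R • ⊤ : Submodule R M) →
          φ v ∈ IsLocalRing.maximalIdeal R) := by
  obtain ⟨π, hπ⟩ := IsDiscreteValuationRing.exists_irreducible R
  have hspan : IsLocalRing.maximalIdeal R = Ideal.span {π} := hπ.maximalIdeal_eq
  have hπ0 : π ≠ 0 := hπ.ne_zero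
  have hπK : algebraMap R K π = 0 := by
    rw [← RingHom.mem_ker, hker, hspan]
    exact Ideal.subset_span rfl
  have hsmul : (IsLocalRing.maximalIdeal R • ⊤ : Submodule R M)
      = π • (⊤ : Submodule R M) := by
    rw [hspan, Submodule.ideal_span_singleton_smul]
  have hmem : ∀ m : M, π • m ∈ N := by
    intro m
    rw [hN, Submodule.mem_comap]
    show (1 : K) ⊗ₜ[R] (π • m) ∈ W.restrictScalars R
    have h0 : (1 : K) ⊗ₜ[R] (π • m) = (0 : K ⊗[R] M) := by
      rw [TensorProduct.tmul_smul, TensorProduct.smul_tmul', Algebra.smul_def, hπK,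
        mul_one, TensorProduct.zero_tmul]
    rw [h0]
    exact Submodule.zero_mem _
  constructor
  · intro ψ ψ' h
    ext m
    have h1 : ψ (π • m) = ψ' (π • m) :=
      congrArg (fun f => f (⟨π • m, hmem m⟩ : N)) h
    rw [map_smul, map_smul, smul_eq_mul, smul_eq_mul] at h1
    exact mul_left_cancel₀ hπ0 h1
  · intro φ
    constructor
    · rintro ⟨ψ, rfl⟩ v hv
      have : ψ (v : M) ∈ IsLocalRing.maximalIdeal R := by
        refine Submodule.smul_induction_on hv ?_ ?_
        · intro a ha m _
          rw [map_smul, smul_eq_mul]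
          exact Ideal.mul_mem_right _ _ ha
        · intro x y hx hy
          rw [map_add]
          exact add_mem hx hy
      exact this
    · intro hφ
      have hd : ∀ m : M, ∃ cm : R, φ ⟨π • m, hmem m⟩ = π * cm := by
        intro m
        have hv : (π • m : M) ∈ (IsLocalRing.maximalIdeal R • ⊤ : Submodule R M) := by
          rw [hsmul]
          exact Submodule.smul_mem_pointwise_smul m π ⊤ trivial
        have := hφ ⟨π • m, hmem m⟩ hv
        rw [hspan, Ideal.mem_span_singleton] at this
        obtain ⟨cm, hcm⟩ := this
        exact ⟨cm, hcm⟩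
      choose c hc using hd
      have hadd : ∀ m m' : M, c (m + m') = c m + c m' := by
        intro m m'
        apply mul_left_cancel₀ hπ0
        have : (⟨π • (m + m'), hmem (m + m')⟩ : N)
            = ⟨π • m, hmem m⟩ + ⟨π • m', hmem m'⟩ := by
          apply Subtype.ext
          simp [smul_add]
        rw [mul_add, ← hc, ← hc, ← hc, this, map_add]
      have hsmul' : ∀ (a : R) (m : M), c (a • m) = a * c m := by
        intro a m
        apply mul_left_cancel₀ hπ0
        have : (⟨π • (a • m), hmem (a • m)⟩ : N) = a • ⟨π • m, hmem m⟩ := by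
          apply Subtype.ext
          simp [smul_comm π a m]
        rw [← hc, this, map_smul, smul_eq_mul, hc, mul_left_comm]
      refine ⟨⟨⟨c, hadd⟩, hsmul'⟩, ?_⟩
      ext v
      have h1 : π * c (v : M) = π * φ v := by
        have : (⟨π • (v : M), hmem (v : M)⟩ : N) = π • v := by
          apply Subtype.ext; rfl
        rw [← hc, this, map_smul, smul_eq_mul]
      have h2 : c (v : M) = φ v := mul_left_cancel₀ hπ0 h1
      exact h2
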